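/- For a prime p, two circulant digraphs Cay(Z_p, X) and Cay(Z_p, X') are isomorphic if and only if X' = mX for some m ∈ Z_p*. -/

import Mathlib

open Equiv Subgroup

variable {p : ℕ}

private def sigma (p : ℕ) : Equiv.Perm (ZMod p) := Equiv.addRight 1

lemma sigma_pow (n : ℕ) (x : ZMod p) : ((sigma p) ^ n) x = x + n := by
  induction n with
  | zero => simp [sigma]
  | succ k ih =>
      rw [pow_succ', Perm.mul_apply, ih]
      simp [sigma]; push_cast; ring

lemma sigma_zpow (n : ℤ) (x : ZMod p) : ((sigma p) ^ n) x = x + n := by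
  induction n using Int.rec with
  | ofNat k => simpa using sigma_pow k x
  | negSucc k =>
      have h : ((sigma p) ^ ((k:ℤ)+1) * (sigma p) ^ (Int.negSucc k)) x = x := by
        rw [← zpow_add]
        have : (k:ℤ) + 1 + Int.negSucc k = 0 := by rw [Int.negSucc_eq]; ring
        rw [this, zpow_zero]; rfl
      rw [Perm.mul_apply] at h
      have h2 : ((sigma p) ^ ((k:ℤ)+1)) (((sigma p) ^ (Int.negSucc k)) x)
          = ((sigma p) ^ (Int.negSucc k)) x + ((k:ZMod p)+1) := by
        have := sigma_pow (p := p) (k+1) (((sigma p) ^ (Int.negSucc k)) x)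
        rw [← zpow_natCast] at this; push_cast at this ⊢; exact this
      rw [h2] at h
      have : ((sigma p) ^ (Int.negSucc k)) x = x - ((k:ZMod p)+1) := by
        linear_combination h
      rw [this, Int.negSucc_eq]; push_cast; ring

lemma orderOf_sigma (hp : p.Prime) : orderOf (sigma p) = p := by
  haveI : Fact p.Prime := ⟨hp⟩
  refine orderOf_eq_prime ?_ ?_
  · ext x; rw [sigma_pow]; simp [ZMod.natCast_self]
  · intro h
    have := congrFun (congrArg (fun e => e.toFun) h) 0
    simp [sigma] at this

def autS (p : ℕ) (X : Set (ZMod p)) : Subgroup (Equiv.Perm (ZMod p)) where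
  carrier := {f | ∀ u v, v - u ∈ X ↔ f v - f u ∈ X}
  one_mem' := by intro u v; simp
  mul_mem' := by
    intro f g hf hg u v
    exact (hg u v).trans (hf (g u) (g v))
  inv_mem' := by
    intro f hf u v
    have := hf (f⁻¹ u) (f⁻¹ v)
    simp only [Perm.inv_def, Equiv.apply_symm_apply] at this
    exact this.symm

lemma conj_zpowers (hp : p.Prime) (A : Subgroup (Equiv.Perm (ZMod p))) (a b : A)
    (ha : orderOf a = p) (hb : orderOf b = p) :
    ∃ g : A, ∃ j : ℤ, g * a * g⁻¹ = b ^ j := by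
  haveI : Fact p.Prime := ⟨hp⟩
  have key : ∀ c : A, orderOf c = p → ∃ P : Sylow p A, (P : Subgroup A) = zpowers c := by
    intro c hc
    have hpg : IsPGroup p (zpowers c) :=
      IsPGroup.of_card (n := 1) (by rw [Nat.card_zpowers, hc, pow_one])
    obtain ⟨P, hP⟩ := hpg.exists_le_sylow
    refine ⟨P, ?_⟩
    obtain ⟨n, hn⟩ := (IsPGroup.iff_card).mp P.isPGroup'
    have hdvd : (p:ℕ)^n ∣ Nat.card (Equiv.Perm (ZMod p)) :=
      hn ▸ (Subgroup.card_subgroup_dvd_card (P : Subgroup A)).trans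
        (Subgroup.card_subgroup_dvd_card A)
    have hfac : Nat.card (Equiv.Perm (ZMod p)) = p.factorial := by
      rw [Nat.card_eq_fintype_card, Fintype.card_perm, ZMod.card]
    rw [hfac] at hdvd
    have hn1 : n ≤ 1 := by
      by_contra h
      have : p ^ 2 ∣ p.factorial := dvd_trans (pow_dvd_pow p (by omega)) hdvd
      have hfact : p.factorial = p * (p-1).factorial := by
        conv_lhs => rw [← Nat.succ_pred_eq_of_pos hp.pos]
        rw [Nat.factorial_succ]
        have : p - 1 + 1 = p := Nat.succ_pred_eq_of_pos hp.pos
        simp [Nat.pred_eq_sub_one, this]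
      rw [hfact, pow_two] at this
      have hdd : p ∣ (p-1).factorial :=
        (mul_dvd_mul_iff_left (a := p) (by exact_mod_cast hp.pos.ne') ).mp this
      have := (Nat.Prime.dvd_factorial hp).mp hdd
      have := hp.two_le
      omega
    have hcard : Nat.card (P : Subgroup A) ≤ Nat.card (zpowers c) := by
      rw [hn, Nat.card_zpowers, hc]
      calc p ^ n ≤ p ^ 1 := Nat.pow_le_pow_right hp.pos hn1
      _ = p := pow_one p
    exact (Subgroup.eq_of_le_of_card_ge hP hcard).symm
  obtain ⟨P, hPc⟩ := key a ha
  obtain ⟨Q, hQc⟩ := key b hb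
  obtain ⟨g, hg⟩ := MulAction.exists_smul_eq A P Q
  refine ⟨g, ?_⟩
  have hmem : g * a * g⁻¹ ∈ (Q : Subgroup A) := by
    rw [← hg]
    have ha' : a ∈ (P : Subgroup A) := hPc ▸ mem_zpowers a
    rw [Sylow.coe_subgroup_smul]
    have := Subgroup.smul_mem_pointwise_smul a (MulAut.conj g) (P : Subgroup A) ha'
    simpa [MulAut.conj] using this
  rw [hQc] at hmem
  obtain ⟨j, hj⟩ := hmem
  exact ⟨j, hj.symm⟩

def CirculantIso (n : ℕ) (X X' : Set (ZMod n)) : Prop :=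
  ∃ e : ZMod n ≃ ZMod n, ∀ u v : ZMod n, v - u ∈ X ↔ e v - e u ∈ X'

/-- Turner's theorem: Ádám's conjecture holds for circulant digraphs of prime order. -/
theorem stmt_5 (p : ℕ) (hp : p.Prime) (X X' : Set (ZMod p))
    (hX : (0 : ZMod p) ∉ X) (hX' : (0 : ZMod p) ∉ X') :
    CirculantIso p X X' ↔ ∃ m : (ZMod p)ˣ, (fun x => (m : ZMod p) * x) '' X = X' := by
  haveI : Fact p.Prime := ⟨hp⟩
  constructor
  · rintro ⟨e, he⟩
    set A := autS p X with hA
    -- σ ∈ A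
    have hσA : sigma p ∈ A := by
      intro u v
      simp [sigma]
    set a : A := ⟨sigma p, hσA⟩ with ha
    have haord : orderOf a = p := by
      have h := orderOf_injective A.subtype A.subtype_injective a
      rw [← h]
      exact orderOf_sigma hp
    -- τ = e⁻¹ σ e ∈ A
    set τ : Equiv.Perm (ZMod p) := e⁻¹ * (sigma p) * e with hτdef
    have hτapp : ∀ x, τ x = e.symm (e x + 1) := by intro x; simp [hτdef, sigma]
    have hτA : τ ∈ A := by
      intro u v
      have h1 := he u v
      have h2 := he (τ u) (τ v)
      have h3 : e (τ v) = e v + 1 := by rw [hτapp]; exact e.apply_symm_apply _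
      have h4 : e (τ u) = e u + 1 := by rw [hτapp]; exact e.apply_symm_apply _
      rw [h3, h4] at h2
      rw [h1, h2]
      constructor
      · intro h; simpa using h
      · intro h; simpa using h
    set b : A := ⟨τ, hτA⟩ with hb
    have hbord : orderOf b = p := by
      have h1 : orderOf b = orderOf τ :=
        (orderOf_injective A.subtype A.subtype_injective b).symm ▸ rfl
      have h2 : orderOf τ = orderOf (sigma p) := by
        have := orderOf_injective ((MulAut.conj (e⁻¹ : Equiv.Perm (ZMod p))).toMonoidHom)
          (MulEquiv.injective _) (sigma p)
        simpa [hτdef, MulAut.conj, mul_assoc] using this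
      rw [← orderOf_injective A.subtype A.subtype_injective b]
      exact h2.trans (orderOf_sigma hp)
    obtain ⟨g, j, hgj⟩ := conj_zpowers hp A a b haord hbord
    -- push to Perm level
    have hperm : (g : Equiv.Perm (ZMod p)) * sigma p * (g : Equiv.Perm (ZMod p))⁻¹
        = τ ^ j := by
      have := congrArg (Subtype.val) hgj
      simpa using this
    set c : ZMod p := ((j : ℤ) : ZMod p) with hc
    set f : Equiv.Perm (ZMod p) := e * (g : Equiv.Perm (ZMod p)) with hf
    -- key step equation
    have hkey : ∀ x, f (x + 1) = f x + c := by
      intro x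
      have h1 : τ ^ j = e⁻¹ * (sigma p) ^ j * e := by
        have : τ = e⁻¹ * sigma p * (e⁻¹)⁻¹ := by rw [hτdef]; simp
        rw [this, conj_zpow]; simp
      have h2 : f * sigma p * f⁻¹ = (sigma p) ^ j := by
        rw [hf]
        have := congrArg (fun z => e * z * e⁻¹) hperm
        rw [h1] at this
        calc e * ↑g * sigma p * (e * ↑g)⁻¹ = e * (↑g * sigma p * (↑g)⁻¹) * e⁻¹ := by group
        _ = e * (e⁻¹ * (sigma p)^j * e) * e⁻¹ := by rw [hperm, h1]
        _ = (sigma p)^j := by group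
      have := congrFun (congrArg (fun (z : Equiv.Perm (ZMod p)) => (z : ZMod p → ZMod p)) h2) (f x)
      simp only [Perm.mul_apply, Perm.inv_def, Equiv.symm_apply_apply] at this
      have hσx : sigma p x = x + 1 := rfl
      rw [hσx] at this
      rw [this, sigma_zpow]
    -- f is affine
    have haff : ∀ x : ZMod p, f x = f 0 + x * c := by
      have hnat : ∀ n : ℕ, f (n : ZMod p) = f 0 + (n : ZMod p) * c := by
        intro n
        induction n with
        | zero => simp
        | succ k ih =>
            push_cast
            rw [hkey, ih]
            ring
      intro x
      haveI : NeZero p := ⟨hp.pos.ne'⟩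
      have : ((x.val : ℕ) : ZMod p) = x := ZMod.natCast_rightInverse x
      rw [← this, hnat]
    -- f is an iso from X to X'
    have hfiso : ∀ u v : ZMod p, v - u ∈ X ↔ f v - f u ∈ X' := by
      intro u v
      have hg' := g.2 u v
      have := he ((g : Equiv.Perm (ZMod p)) u) ((g : Equiv.Perm (ZMod p)) v)
      rw [hg', this]
      rfl
    have hmul : ∀ x : ZMod p, x ∈ X ↔ x * c ∈ X' := by
      intro x
      have := hfiso 0 x
      rw [sub_zero] at this
      rw [this, haff, haff]
      ring_nf
    -- c ≠ 0
    have hc0 : c ≠ 0 := by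
      intro h
      have h1 : ∀ x, f (x + 1) = f x := by intro x; rw [hkey, h, add_zero]
      have := h1 0
      rw [zero_add] at this
      exact one_ne_zero (Equiv.injective f this)
    refine ⟨Units.mk0 c hc0, ?_⟩
    ext y
    simp only [Set.mem_image, Units.val_mk0]
    constructor
    · rintro ⟨x, hx, rfl⟩
      rw [mul_comm]
      exact (hmul x).mp hx
    · intro hy
      refine ⟨c⁻¹ * y, ?_, ?_⟩
      · rw [hmul]
        have : c⁻¹ * y * c = y := by field_simp
        rwa [this]
      · field_simp
  · rintro ⟨m, hm⟩
    refine ⟨Equiv.mulLeft₀ (m : ZMod p) m.ne_zero, ?_⟩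
    intro u v
    simp only [Equiv.mulLeft₀_apply]
    rw [← mul_sub, ← hm]
    constructor
    · intro h; exact ⟨v - u, h, rfl⟩
    · rintro ⟨x, hx, hxeq⟩
      have : x = v - u := by
        have := mul_left_cancel₀ (a := (m : ZMod p)) m.ne_zero hxeq
        exact this
      rwa [← this]
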